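/- arXiv:2503.02568 — 8 statements merged into one kernel-verified Lean document; each statement's English description precedes it below -/
import Mathlib

section
/- Let ψ_1,…,ψ_N be unit vectors in ℂ^d with prior probabilities η_1,…,η_N, and let G be the Gram matrix of the ensemble. Then for any POVM Π_1,…,Π_N with N outcomes on ℂ^d there exists a family Ξ_1,…,Ξ_N of positive semidefinite N×N complex matrices such that G − Σ_{k=1}^N Ξ_k is positive semidefinite and η_k ⟨ψ_k, Π_l ψ_k⟩ = (Ξ_l)_{k,k} for all k, l ∈ {1,…,N}. -/
open Matrix BigOperators
open scoped ComplexOrder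

/-- Given an ensemble of unit vectors `ψ k ∈ ℂ^d` with prior
probabilities `η k` and Gram matrix `G`, for any `N`-outcome POVM `P` on `ℂ^d`
there exist PSD `N × N` matrices `Ξ k` with `G - ∑ Ξ k` PSD and
`η k ⟨ψ k, P l ψ k⟩ = (Ξ l) k k`. -/
theorem gram_complete_descriptor_forward
    (d N : ℕ) (ψ : Fin N → (Fin d → ℂ)) (η : Fin N → ℝ)
    (hψ : ∀ k, star (ψ k) ⬝ᵥ ψ k = 1)
    (hη : ∀ k, 0 ≤ η k) (hηsum : ∑ k, η k = 1)
    (G : Matrix (Fin N) (Fin N) ℂ)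
    (hG : ∀ k l, G k l = (Real.sqrt (η k * η l) : ℂ) * (star (ψ k) ⬝ᵥ ψ l))
    (P : Fin N → Matrix (Fin d) (Fin d) ℂ)
    (hP : ∀ k, (P k).PosSemidef)
    (hPsum : (1 - ∑ k, P k).PosSemidef) :
    ∃ Ξ : Fin N → Matrix (Fin N) (Fin N) ℂ,
      (∀ k, (Ξ k).PosSemidef) ∧ (G - ∑ k, Ξ k).PosSemidef ∧
      ∀ k l, (η k : ℂ) * (star (ψ k) ⬝ᵥ (P l *ᵥ ψ k)) = Ξ l k k := by
  set B : Matrix (Fin N) (Fin d) ℂ :=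
    fun k i => (Real.sqrt (η k) : ℂ) * star (ψ k i) with hB
  have hGB : G = B * Bᴴ := by
    ext k l
    rw [hG, mul_apply]
    simp only [conjTranspose_apply, dotProduct, Pi.star_apply]
    simp only [hB]
    push_cast [Real.sqrt_mul (hη k)]
    rw [Finset.mul_sum]
    apply Finset.sum_congr rfl
    intro i _
    simp only [star_mul', star_star, Complex.star_def, Complex.conj_ofReal,
      Complex.conj_conj]
    ring
  refine ⟨fun l => B * P l * Bᴴ, fun l => (hP l).mul_mul_conjTranspose_same B, ?_, ?_⟩
  · have : G - ∑ k, B * P k * Bᴴ = B * (1 - ∑ k, P k) * Bᴴ := by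
      rw [hGB, Matrix.mul_sub, Matrix.mul_one, Matrix.sub_mul, Matrix.mul_sum,
        Matrix.sum_mul]
    rw [this]
    exact hPsum.mul_mul_conjTranspose_same B
  · intro k l
    have hsq : (Real.sqrt (η k) : ℂ) * (Real.sqrt (η k) : ℂ) = (η k : ℂ) := by
      rw [← Complex.ofReal_mul, Real.mul_self_sqrt (hη k)]
    trans ∑ i, ∑ j, (η k : ℂ) * ((starRingEnd ℂ) (ψ k i) * (P l i j * ψ k j))
    · simp only [dotProduct, mulVec, Pi.star_apply, Complex.star_def]
      rw [Finset.mul_sum]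
      refine Finset.sum_congr rfl fun i _ => ?_
      rw [Finset.mul_sum, Finset.mul_sum]
    · simp only [mul_apply, conjTranspose_apply, Finset.sum_mul]
      simp only [hB]
      rw [Finset.sum_comm]
      apply Finset.sum_congr rfl
      intro i _
      apply Finset.sum_congr rfl
      intro j _
      simp only [star_mul', star_star, Complex.star_def, Complex.conj_ofReal,
        Complex.conj_conj]
      rw [← hsq]; ring
end

section
/- Let ψ_1,…,ψ_N be unit vectors in ℂ^d with prior probabilities η_1,…,η_N, and let G be the Gram matrix of the ensemble. If Ξ_1,…,Ξ_N are positive semidefinite N×N complex matrices such that G − Σ_{k=1}^N Ξ_k is positive semidefinite, then there exists a POVM Π_1,…,Π_N with N outcomes on ℂ^d such that η_k ⟨ψ_k, Π_l ψ_k⟩ = (Ξ_l)_{k,k} for all k, l ∈ {1,…,N}. -/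
open Matrix BigOperators
open scoped ComplexOrder
open scoped MatrixOrder

lemma aux_quad_sum {n N : ℕ} (M : Fin N → Matrix (Fin n) (Fin n) ℂ) (x : Fin n → ℂ) :
    star x ⬝ᵥ ((∑ k, M k) *ᵥ x) = ∑ k, star x ⬝ᵥ (M k *ᵥ x) := by
  have h1 : (∑ k, M k) *ᵥ x = ∑ k, M k *ᵥ x := by
    ext i
    simp only [Matrix.mulVec, dotProduct, Matrix.sum_apply, Finset.sum_apply,
      Finset.sum_mul]
    exact Finset.sum_comm
  rw [h1]
  simp only [dotProduct, Finset.sum_apply, Finset.mul_sum]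
  exact Finset.sum_comm

/-- A PSD matrix whose quadratic form vanishes identically is zero. -/
lemma aux_psd_eq_zero {n : ℕ} {M : Matrix (Fin n) (Fin n) ℂ} (hM : M.PosSemidef)
    (h : ∀ x : Fin n → ℂ, star x ⬝ᵥ (M *ᵥ x) = 0) : M = 0 := by
  have h' : ∀ x, M *ᵥ x = 0 := fun x => (hM.dotProduct_mulVec_zero_iff x).mp (h x)
  ext i j
  have := congrFun (h' (Pi.single j 1)) i
  simpa [Matrix.mulVec_single] using this

/-- If each summand is PSD and the negative of the total is PSD, each summand is zero. -/
lemma aux_psd_sum_zero {n N : ℕ} (M : Fin N → Matrix (Fin n) (Fin n) ℂ)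
    (hM : ∀ k, (M k).PosSemidef) (hsum : (-(∑ k, M k)).PosSemidef) (l : Fin N) :
    M l = 0 := by
  refine aux_psd_eq_zero (hM l) fun x => ?_
  have h1 : ∀ k, 0 ≤ star x ⬝ᵥ (M k *ᵥ x) := fun k => (hM k).dotProduct_mulVec_nonneg x
  have h2 : ∑ k, star x ⬝ᵥ (M k *ᵥ x) ≤ 0 := by
    have h0 := hsum.dotProduct_mulVec_nonneg x
    rw [Matrix.neg_mulVec, dotProduct_neg, aux_quad_sum] at h0
    exact neg_nonneg.mp h0
  have h3 : star x ⬝ᵥ (M l *ᵥ x) ≤ ∑ k, star x ⬝ᵥ (M k *ᵥ x) :=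
    Finset.single_le_sum (fun k _ => h1 k) (Finset.mem_univ l)
  exact le_antisymm (h3.trans h2) (h1 l)

set_option maxHeartbeats 1000000 in
/-- Given an ensemble of unit vectors `ψ k ∈ ℂ^d` with prior
probabilities `η k` and Gram matrix `G`, if `Ξ k` are PSD `N × N` matrices with
`G - ∑ Ξ k` PSD, then there is an `N`-outcome POVM `P` on `ℂ^d` with
`η k ⟨ψ k, P l ψ k⟩ = (Ξ l) k k`. -/
theorem gram_complete_descriptor_converse
    (d N : ℕ) (ψ : Fin N → (Fin d → ℂ)) (η : Fin N → ℝ)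
    (hψ : ∀ k, star (ψ k) ⬝ᵥ ψ k = 1)
    (hη : ∀ k, 0 ≤ η k) (hηsum : ∑ k, η k = 1)
    (G : Matrix (Fin N) (Fin N) ℂ)
    (hG : ∀ k l, G k l = (Real.sqrt (η k * η l) : ℂ) * (star (ψ k) ⬝ᵥ ψ l))
    (Ξ : Fin N → Matrix (Fin N) (Fin N) ℂ)
    (hΞ : ∀ k, (Ξ k).PosSemidef)
    (hΞsum : (G - ∑ k, Ξ k).PosSemidef) :
    ∃ P : Fin N → Matrix (Fin d) (Fin d) ℂ,
      (∀ k, (P k).PosSemidef) ∧ (1 - ∑ k, P k).PosSemidef ∧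
      ∀ k l, (η k : ℂ) * (star (ψ k) ⬝ᵥ (P l *ᵥ ψ k)) = Ξ l k k := by
  classical
  -- the "amplitude" matrix, with columns √η_k ψ_k
  set A : Matrix (Fin d) (Fin N) ℂ :=
    Matrix.of (fun i k => (Real.sqrt (η k) : ℂ) * ψ k i) with hA
  have hAA : Aᴴ * A = G := by
    ext k l
    rw [hG k l]
    simp only [Matrix.mul_apply, Matrix.conjTranspose_apply, hA, Matrix.of_apply,
      dotProduct, star_mul', Complex.star_def, Complex.conj_ofReal,
      Pi.star_apply, RCLike.star_def]
    rw [Finset.mul_sum]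
    congr 1
    funext i
    rw [Real.sqrt_mul (hη k)]
    push_cast
    ring
  -- G is PSD
  have hΞs : (∑ k, Ξ k).PosSemidef := by
    refine Finset.sum_induction _ _ (fun a b ha hb => ha.add hb) Matrix.PosSemidef.zero
      (fun k _ => hΞ k)
  have hGpsd : G.PosSemidef := by
    have := hΞsum.add hΞs
    simpa using this
  have hH : G.IsHermitian := hGpsd.isHermitian
  set U : Matrix (Fin N) (Fin N) ℂ := (hH.eigenvectorUnitary : Matrix (Fin N) (Fin N) ℂ)
    with hUdef
  set lam : Fin N → ℝ := hH.eigenvalues with hlamdef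
  have hlam : ∀ i, 0 ≤ lam i := fun i => hGpsd.eigenvalues_nonneg i
  have hU1 : Uᴴ * U = 1 := by
    simpa [hUdef, Matrix.star_eq_conjTranspose] using
      (Matrix.mem_unitaryGroup_iff'.mp hH.eigenvectorUnitary.2)
  -- conjugated diagonal matrices
  set D : (Fin N → ℝ) → Matrix (Fin N) (Fin N) ℂ :=
    fun f => U * Matrix.diagonal (fun i => (f i : ℂ)) * Uᴴ with hDdef
  have hDcong : ∀ (f g : Fin N → ℝ), (∀ i, f i = g i) → D f = D g := by
    intro f g h
    have : f = g := funext h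
    rw [this]
  have hDmul : ∀ f g, D f * D g = D (fun i => f i * g i) := by
    intro f g
    simp only [hDdef]
    calc U * Matrix.diagonal (fun i => (f i : ℂ)) * Uᴴ *
          (U * Matrix.diagonal (fun i => (g i : ℂ)) * Uᴴ)
        = U * Matrix.diagonal (fun i => (f i : ℂ)) * (Uᴴ * U) *
            (Matrix.diagonal (fun i => (g i : ℂ)) * Uᴴ) := by
          simp only [Matrix.mul_assoc]
      _ = U * (Matrix.diagonal (fun i => (f i : ℂ)) *
            Matrix.diagonal (fun i => (g i : ℂ))) * Uᴴ := by
          rw [hU1]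
          simp only [Matrix.mul_one, Matrix.mul_assoc]
      _ = U * Matrix.diagonal (fun i => ((f i * g i : ℝ) : ℂ)) * Uᴴ := by
          rw [Matrix.diagonal_mul_diagonal]
          norm_cast
  have hDH : ∀ f, (D f)ᴴ = D f := by
    intro f
    simp only [hDdef, Matrix.conjTranspose_mul, Matrix.conjTranspose_conjTranspose,
      Matrix.diagonal_conjTranspose]
    rw [Matrix.mul_assoc]
    congr 1
    simp [Pi.star_def, Complex.conj_ofReal]
  have hGD : G = D lam := by
    exact hH.spectral_theorem
  set Gp : Matrix (Fin N) (Fin N) ℂ := D (fun i => (lam i)⁻¹) with hGpdef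
  set Pr : Matrix (Fin N) (Fin N) ℂ := D (fun i => if lam i = 0 then 0 else 1) with hPrdef
  have hGpH : Gpᴴ = Gp := hDH _
  have hPrH : Prᴴ = Pr := hDH _
  have hGGp : G * Gp = Pr := by
    rw [hGD, hGpdef, hDmul, hPrdef]
    exact hDcong _ _ fun i => by by_cases h : lam i = 0 <;> simp [h, mul_inv_cancel₀]
  have hGpG : Gp * G = Pr := by
    rw [hGD, hGpdef, hDmul, hPrdef]
    exact hDcong _ _ fun i => by by_cases h : lam i = 0 <;> simp [h, inv_mul_cancel₀]
  have hGpPr : Gp * Pr = Gp := by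
    rw [hGpdef, hPrdef, hDmul]
    exact hDcong _ _ fun i => by by_cases h : lam i = 0 <;> simp [h]
  have hPrGp : Pr * Gp = Gp := by
    rw [hGpdef, hPrdef, hDmul]
    exact hDcong _ _ fun i => by by_cases h : lam i = 0 <;> simp [h]
  have hGPr : G * Pr = G := by
    rw [hGD, hPrdef, hDmul]
    exact hDcong _ _ fun i => by by_cases h : lam i = 0 <;> simp [h]
  have hPrG : Pr * G = G := by
    rw [hGD, hPrdef, hDmul]
    exact hDcong _ _ fun i => by by_cases h : lam i = 0 <;> simp [h]
  -- A * Pr = A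
  have hAPr : A * Pr = A := by
    have hz : (A * Pr - A)ᴴ * (A * Pr - A) = 0 := by
      rw [Matrix.conjTranspose_sub, Matrix.conjTranspose_mul, hPrH]
      rw [Matrix.sub_mul, Matrix.mul_sub, Matrix.mul_sub]
      have e1 : Pr * Aᴴ * (A * Pr) = G * Pr := by
        rw [Matrix.mul_assoc, ← Matrix.mul_assoc Aᴴ A Pr, hAA, ← Matrix.mul_assoc, hPrG]
      have e2 : Pr * Aᴴ * A = G := by rw [Matrix.mul_assoc, hAA, hPrG]
      have e3 : Aᴴ * (A * Pr) = G * Pr := by rw [← Matrix.mul_assoc, hAA]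
      rw [e1, e2, e3, hAA, hGPr]
      simp
    have h2 : A * Pr - A = 0 := Matrix.conjTranspose_mul_self_eq_zero.mp hz
    exact sub_eq_zero.mp h2
  -- each Ξ l is supported on the range of G
  have hΞPr : ∀ l, Ξ l * Pr = Ξ l ∧ Pr * Ξ l = Ξ l := by
    have hQ : ∀ l, (1 - Pr) * Ξ l * (1 - Pr) = 0 := by
      intro l
      have hQH : (1 - Pr)ᴴ = 1 - Pr := by
        rw [Matrix.conjTranspose_sub, Matrix.conjTranspose_one, hPrH]
      have hQG : (1 - Pr) * G = 0 := by
        rw [Matrix.sub_mul, Matrix.one_mul, hPrG, sub_self]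
      have hMpsd : ∀ k, ((1 - Pr) * Ξ k * (1 - Pr)).PosSemidef := by
        intro k
        have := (hΞ k).mul_mul_conjTranspose_same (1 - Pr)
        rwa [hQH] at this
      have hneg : (-(∑ k, (1 - Pr) * Ξ k * (1 - Pr))).PosSemidef := by
        have hgen : ∀ Q : Matrix (Fin N) (Fin N) ℂ, Q * G = 0 →
            Q * (G - ∑ k, Ξ k) * Q = -(∑ k, Q * Ξ k * Q) := by
          intro Q hQG0
          rw [Matrix.mul_sub, hQG0, zero_sub, Matrix.neg_mul, Matrix.mul_sum,
            Matrix.sum_mul]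
        have h0 := hgen (1 - Pr) hQG
        have := hΞsum.mul_mul_conjTranspose_same (1 - Pr)
        rwa [hQH, h0] at this
      exact aux_psd_sum_zero _ hMpsd hneg l
    intro l
    have hRH : (CFC.sqrt (Ξ l))ᴴ = CFC.sqrt (Ξ l) := (CFC.sqrt_nonneg (Ξ l)).posSemidef.isHermitian
    have hRR : CFC.sqrt (Ξ l) * CFC.sqrt (Ξ l) = Ξ l := CFC.sqrt_mul_sqrt_self (Ξ l) (hΞ l).nonneg
    have hRQ : CFC.sqrt (Ξ l) * (1 - Pr) = 0 := by
      have hz : (CFC.sqrt (Ξ l) * (1 - Pr))ᴴ * (CFC.sqrt (Ξ l) * (1 - Pr)) = 0 := by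
        rw [Matrix.conjTranspose_mul, hRH]
        have hPrH' : (1 - Pr)ᴴ = 1 - Pr := by
          rw [Matrix.conjTranspose_sub, Matrix.conjTranspose_one, hPrH]
        rw [hPrH']
        calc (1 - Pr) * CFC.sqrt (Ξ l) * (CFC.sqrt (Ξ l) * (1 - Pr))
            = (1 - Pr) * (CFC.sqrt (Ξ l) * CFC.sqrt (Ξ l)) * (1 - Pr) := by
              simp only [Matrix.mul_assoc]
          _ = 0 := by rw [hRR]; exact hQ l
      exact Matrix.conjTranspose_mul_self_eq_zero.mp hz
    have hXi1 : Ξ l * (1 - Pr) = 0 := by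
      rw [← hRR, Matrix.mul_assoc, hRQ, Matrix.mul_zero]
    have h1 : Ξ l * Pr = Ξ l := by
      rw [Matrix.mul_sub, Matrix.mul_one, sub_eq_zero] at hXi1
      exact hXi1.symm
    refine ⟨h1, ?_⟩
    calc Pr * Ξ l = ((Ξ l)ᴴ * Prᴴ)ᴴ := by
          rw [← Matrix.conjTranspose_mul, Matrix.conjTranspose_conjTranspose]
      _ = Ξ l := by rw [(hΞ l).isHermitian.eq, hPrH, h1, (hΞ l).isHermitian.eq]
  -- the POVM
  set B : Matrix (Fin d) (Fin N) ℂ := A * Gp with hBdef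
  have hBH : Bᴴ = Gp * Aᴴ := by rw [hBdef, Matrix.conjTranspose_mul, hGpH]
  refine ⟨fun l => B * Ξ l * Bᴴ, fun l => (hΞ l).mul_mul_conjTranspose_same B, ?_, ?_⟩
  · -- POVM condition
    set Q0 : Matrix (Fin d) (Fin d) ℂ := A * Gp * Aᴴ with hQ0def
    have hGpGGp : Gp * G * Gp = Gp := by rw [hGpG, hPrGp]
    have hBGB : B * G * Bᴴ = Q0 := by
      rw [hBdef, hBH, hQ0def]
      calc A * Gp * G * (Gp * Aᴴ) = A * (Gp * G * Gp) * Aᴴ := by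
            simp only [Matrix.mul_assoc]
        _ = A * Gp * Aᴴ := by rw [hGpGGp, Matrix.mul_assoc]
    have hsumP : ∑ l, B * Ξ l * Bᴴ = B * (∑ l, Ξ l) * Bᴴ := by
      rw [Matrix.mul_sum, Matrix.sum_mul]
    have hpsd1 : (Q0 - ∑ l, B * Ξ l * Bᴴ).PosSemidef := by
      have h0 : B * (G - ∑ k, Ξ k) * Bᴴ = Q0 - ∑ l, B * Ξ l * Bᴴ := by
        rw [Matrix.mul_sub, Matrix.sub_mul, hBGB, ← hsumP]
      have := hΞsum.mul_mul_conjTranspose_same B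
      rwa [h0] at this
    have hQ0H : Q0ᴴ = Q0 := by
      rw [hQ0def]
      simp only [Matrix.conjTranspose_mul, Matrix.conjTranspose_conjTranspose, hGpH]
      simp only [Matrix.mul_assoc]
    have hQ0idem : Q0 * Q0 = Q0 := by
      rw [hQ0def]
      calc A * Gp * Aᴴ * (A * Gp * Aᴴ)
          = A * (Gp * (Aᴴ * A) * Gp) * Aᴴ := by simp only [Matrix.mul_assoc]
        _ = A * Gp * Aᴴ := by
            rw [hAA, hGpGGp, Matrix.mul_assoc]
    have hpsd2 : (1 - Q0).PosSemidef := by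
      have h1 : (1 - Q0)ᴴ * (1 - Q0) = 1 - Q0 := by
        rw [Matrix.conjTranspose_sub, Matrix.conjTranspose_one, hQ0H]
        rw [Matrix.mul_sub, Matrix.sub_mul, Matrix.sub_mul, hQ0idem]
        simp only [Matrix.one_mul, Matrix.mul_one]
        abel
      rw [← h1]
      exact Matrix.posSemidef_conjTranspose_mul_self _
    have hdec : (1 : Matrix (Fin d) (Fin d) ℂ) - ∑ l, B * Ξ l * Bᴴ
        = (1 - Q0) + (Q0 - ∑ l, B * Ξ l * Bᴴ) := by abel
    rw [hdec]
    exact hpsd2.add hpsd1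
  · -- the probabilities
    intro k l
    have hkey : Aᴴ * (B * Ξ l * Bᴴ) * A = Ξ l := by
      rw [hBdef, hBH]
      calc Aᴴ * (A * Gp * Ξ l * (Gp * Aᴴ)) * A
          = (Aᴴ * A) * Gp * (Ξ l * (Gp * (Aᴴ * A))) := by simp only [Matrix.mul_assoc]
        _ = Pr * (Ξ l * Pr) := by rw [hAA, hGGp, hGpG]
        _ = Ξ l := by rw [(hΞPr l).1, (hΞPr l).2]
    have hentry : (Aᴴ * (B * Ξ l * Bᴴ) * A) k k
        = star (fun i => A i k) ⬝ᵥ ((B * Ξ l * Bᴴ) *ᵥ fun i => A i k) := by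
      generalize (B * Ξ l * Bᴴ) = M
      simp only [Matrix.mul_apply, Matrix.conjTranspose_apply, dotProduct,
        Matrix.mulVec, Pi.star_apply]
      simp only [Finset.sum_mul, Finset.mul_sum]
      rw [Finset.sum_comm]
      exact Finset.sum_congr rfl fun i _ => Finset.sum_congr rfl fun j _ => by ring
    have hcol : (fun i => A i k) = (Real.sqrt (η k) : ℂ) • ψ k := by
      funext i
      simp [hA]
    rw [← hkey, hentry, hcol]
    rw [star_smul, Matrix.mulVec_smul, dotProduct_smul, smul_dotProduct]
    simp only [smul_eq_mul, Complex.star_def, Complex.conj_ofReal]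
    rw [← mul_assoc, ← Complex.ofReal_mul, Real.mul_self_sqrt (hη k)]
end

section
/- Let ψ_1,…,ψ_N be unit vectors in ℂ^d with prior probabilities η_1,…,η_N, and let φ_1,…,φ_N be unit vectors in ℂ^{d'} with prior probabilities η̃_1,…,η̃_N, and suppose the two ensembles have the same Gram matrix, i.e. √(η_k η_l) ⟨ψ_k, ψ_l⟩ = √(η̃_k η̃_l) ⟨φ_k, φ_l⟩ for all k,l. Then for every POVM Π_1,…,Π_N with N outcomes on ℂ^d there exists a POVM Π̃_1,…,Π̃_N with N outcomes on ℂ^{d'} such that η_k ⟨ψ_k, Π_l ψ_k⟩ = η̃_k ⟨φ_k, Π̃_l φ_k⟩ for all k, l ∈ {1,…,N}. -/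
open Matrix BigOperators
open scoped ComplexOrder
open scoped InnerProductSpace

noncomputable section

set_option maxHeartbeats 2000000 in
lemma exists_contraction_matrix (d d' N : ℕ)
    (A : Matrix (Fin d) (Fin N) ℂ) (B : Matrix (Fin d') (Fin N) ℂ)
    (hAB : Aᴴ * A = Bᴴ * B) :
    ∃ W : Matrix (Fin d') (Fin d) ℂ,
      (1 - W * Wᴴ).PosSemidef ∧ ∀ x : Fin N → ℂ, Wᴴ *ᵥ (B *ᵥ x) = A *ᵥ x := by
  classical
  set f : EuclideanSpace ℂ (Fin N) →ₗ[ℂ] EuclideanSpace ℂ (Fin d) := Matrix.toEuclideanLin A with hf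
  set g : EuclideanSpace ℂ (Fin N) →ₗ[ℂ] EuclideanSpace ℂ (Fin d') := Matrix.toEuclideanLin B with hg
  -- inner products agree
  have hinner : ∀ x y : EuclideanSpace ℂ (Fin N), ⟪f x, f y⟫_ℂ = ⟪g x, g y⟫_ℂ := by
    intro x y
    have h1 : ∀ (m : ℕ) (M : Matrix (Fin m) (Fin N) ℂ) (x y : EuclideanSpace ℂ (Fin N)),
        ⟪Matrix.toEuclideanLin M x, Matrix.toEuclideanLin M y⟫_ℂ =
          dotProduct (star (WithLp.equiv 2 _ x)) ((Mᴴ * M) *ᵥ (WithLp.equiv 2 _ y)) := by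
      intro m M x y
      rw [EuclideanSpace.inner_eq_star_dotProduct]
      simp [Matrix.ofLp_toLpLin, Matrix.toLin'_apply, Matrix.star_mulVec,
        ← Matrix.mulVec_mulVec, Matrix.dotProduct_mulVec, Matrix.vecMul_vecMul]
      rw [← Matrix.vecMul_vecMul, ← dotProduct_mulVec, dotProduct_comm]
    rw [hf, hg, h1, h1, hAB]
  have hker : LinearMap.ker f ≤ LinearMap.ker g := by
    intro x hx
    rw [LinearMap.mem_ker] at hx ⊢
    have := hinner x x
    rw [hx, inner_zero_left] at this
    exact inner_self_eq_zero.mp this.symm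
  set S : Submodule ℂ (EuclideanSpace ℂ (Fin d)) := LinearMap.range f with hS
  set h : S →ₗ[ℂ] EuclideanSpace ℂ (Fin d') :=
    ((LinearMap.ker f).liftQ g hker) ∘ₗ (f.quotKerEquivRange).symm.toLinearMap with hh
  have hhf : ∀ x, h ⟨f x, ⟨x, rfl⟩⟩ = g x := by
    intro x
    have : (f.quotKerEquivRange).symm ⟨f x, ⟨x, rfl⟩⟩ = Submodule.Quotient.mk x :=
      f.quotKerEquivRange_symm_apply_image x ⟨x, rfl⟩
    simp [hh, this]
  have hiso : ∀ s t : S, ⟪h s, h t⟫_ℂ = ⟪(s : EuclideanSpace ℂ (Fin d)), (t : _)⟫_ℂ := by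
    rintro ⟨s, x, rfl⟩ ⟨t, y, rfl⟩
    rw [hhf, hhf, ← hinner]
  set W0 : EuclideanSpace ℂ (Fin d) →ₗ[ℂ] EuclideanSpace ℂ (Fin d') :=
    h ∘ₗ (S.orthogonalProjectionOnto).toLinearMap ∘ₗ LinearMap.id with hW0
  have hW0v : ∀ v, W0 v = h (S.orthogonalProjectionOnto v) := fun v => rfl
  -- norm bound
  have hnorm : ∀ v, ‖W0 v‖ ≤ ‖v‖ := by
    intro v
    have h1 : ‖W0 v‖ = ‖(S.orthogonalProjectionOnto v : EuclideanSpace ℂ (Fin d))‖ := by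
      rw [hW0v, norm_eq_sqrt_re_inner (𝕜 := ℂ), norm_eq_sqrt_re_inner (𝕜 := ℂ),
        hiso (S.orthogonalProjectionOnto v) (S.orthogonalProjectionOnto v)]
    rw [h1]
    calc ‖(S.orthogonalProjectionOnto v : EuclideanSpace ℂ (Fin d))‖
        = ‖S.orthogonalProjectionOnto v‖ := rfl
      _ ≤ ‖S.orthogonalProjectionOnto‖ * ‖v‖ := (S.orthogonalProjectionOnto).le_opNorm v
      _ ≤ 1 * ‖v‖ := by
          exact mul_le_mul_of_nonneg_right (S.orthogonalProjectionOnto_norm_le) (norm_nonneg v)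
      _ = ‖v‖ := one_mul _
  -- adjoint composed with W0 is the projection
  have hWW : ∀ v, (LinearMap.adjoint W0) (W0 v) = (S.orthogonalProjectionOnto v : EuclideanSpace ℂ (Fin d)) := by
    intro v
    refine ext_inner_left ℂ (fun u => ?_)
    rw [LinearMap.adjoint_inner_right, hW0v, hW0v, hiso]
    -- ⟪proj u, proj v⟫ = ⟪u, proj v⟫
    have h2 : ⟪u - (S.orthogonalProjectionOnto u : EuclideanSpace ℂ (Fin d)),
        (S.orthogonalProjectionOnto v : EuclideanSpace ℂ (Fin d))⟫_ℂ = 0 :=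
      Submodule.starProjection_inner_eq_zero (K := S) u _ (S.orthogonalProjectionOnto v).2
    rw [inner_sub_left, sub_eq_zero] at h2
    exact h2.symm
  -- W0 on the range of f equals g
  have hW0f : ∀ x, W0 (f x) = g x := by
    intro x
    have hmem : f x ∈ S := ⟨x, rfl⟩
    rw [hW0v]
    have : (S.orthogonalProjectionOnto (f x) : EuclideanSpace ℂ (Fin d)) = f x :=
      Submodule.starProjection_eq_self_iff.mpr hmem
    have h3 : S.orthogonalProjectionOnto (f x) = ⟨f x, hmem⟩ := Subtype.ext this
    rw [h3, hhf]
  have hadj : ∀ x, (LinearMap.adjoint W0) (g x) = f x := by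
    intro x
    rw [← hW0f, hWW]
    exact Submodule.starProjection_eq_self_iff.mpr ⟨x, rfl⟩
  -- the matrix
  set W : Matrix (Fin d') (Fin d) ℂ := Matrix.toEuclideanLin.symm W0 with hW
  have hWmat : Matrix.toEuclideanLin W = W0 := Matrix.toEuclideanLin.apply_symm_apply W0
  have hWH : Matrix.toEuclideanLin Wᴴ = LinearMap.adjoint W0 := by
    rw [Matrix.toEuclideanLin_conjTranspose_eq_adjoint, hWmat]
  refine ⟨W, ?_, ?_⟩
  · refine Matrix.PosSemidef.of_dotProduct_mulVec_nonneg ?_ ?_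
    · exact Matrix.isHermitian_one.sub (Matrix.isHermitian_mul_conjTranspose_self W)
    · intro x
      set v : EuclideanSpace ℂ (Fin d') := (WithLp.equiv 2 (Fin d' → ℂ)).symm x with hv
      set y : EuclideanSpace ℂ (Fin d) := LinearMap.adjoint W0 v with hy
      have hyx : Wᴴ *ᵥ x = WithLp.equiv 2 _ y := by
        have := Matrix.toEuclideanLin_apply_piLp_toLp Wᴴ x
        rw [hWH] at this
        rw [hy, hv, WithLp.equiv_symm_apply, this]
        simp
      have hq : dotProduct (star x) ((1 - W * Wᴴ) *ᵥ x)
          = ⟪v, v⟫_ℂ - ⟪y, y⟫_ℂ := by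
        rw [Matrix.sub_mulVec, Matrix.one_mulVec, dotProduct_sub,
          ← Matrix.mulVec_mulVec, hyx]
        congr 1
        · rw [EuclideanSpace.inner_eq_star_dotProduct, dotProduct_comm]; rfl
        have h6 : W *ᵥ (WithLp.equiv 2 _ y) = WithLp.equiv 2 _ (W0 y) := by
          have := Matrix.toEuclideanLin_apply_piLp_toLp W (WithLp.equiv 2 _ y)
          rw [hWmat] at this
          simp only [WithLp.equiv_apply, WithLp.toLp_ofLp] at this
          rw [this]
          simp
        rw [h6]
        have h7 : ⟪y, y⟫_ℂ = ⟪v, W0 y⟫_ℂ := by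
          rw [hy]
          exact LinearMap.adjoint_inner_left W0 y v
        rw [h7, EuclideanSpace.inner_eq_star_dotProduct]
        simp [hv]
        exact dotProduct_comm _ _
      have hyv : ‖y‖ ≤ ‖v‖ := by
        have h5 : ‖y‖ ^ 2 ≤ ‖v‖ * ‖y‖ := by
          have e1 : ⟪y, y⟫_ℂ = ⟪v, W0 y⟫_ℂ := by
            rw [hy]; exact LinearMap.adjoint_inner_left W0 y v
          have e2 : (‖y‖ : ℝ) ^ 2 = RCLike.re ⟪y, y⟫_ℂ := by
            rw [← inner_self_eq_norm_sq (𝕜 := ℂ)]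
          rw [e2, e1]
          calc RCLike.re ⟪v, W0 y⟫_ℂ ≤ ‖⟪v, W0 y⟫_ℂ‖ := RCLike.re_le_norm _
            _ ≤ ‖v‖ * ‖W0 y‖ := norm_inner_le_norm v (W0 y)
            _ ≤ ‖v‖ * ‖y‖ := mul_le_mul_of_nonneg_left (hnorm y) (norm_nonneg v)
        nlinarith [norm_nonneg y, norm_nonneg v]
      rw [hq, inner_self_eq_norm_sq_to_K, inner_self_eq_norm_sq_to_K]
      have h9 : (0:ℝ) ≤ ‖v‖ ^ 2 - ‖y‖ ^ 2 := by nlinarith [norm_nonneg y, norm_nonneg v]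
      calc (0:ℂ) ≤ ((‖v‖ ^ 2 - ‖y‖ ^ 2 : ℝ) : ℂ) := by
            rw [Complex.zero_le_real]; exact h9
        _ = (‖v‖ : ℂ) ^ 2 - (‖y‖ : ℂ) ^ 2 := by push_cast; ring
  · intro x
    have hx := hadj ((WithLp.equiv 2 (Fin N → ℂ)).symm x)
    have hgx : g ((WithLp.equiv 2 (Fin N → ℂ)).symm x)
        = (WithLp.equiv 2 (Fin d' → ℂ)).symm (B *ᵥ x) :=
      Matrix.toEuclideanLin_apply_piLp_toLp B x
    have hfx : f ((WithLp.equiv 2 (Fin N → ℂ)).symm x)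
        = (WithLp.equiv 2 (Fin d → ℂ)).symm (A *ᵥ x) :=
      Matrix.toEuclideanLin_apply_piLp_toLp A x
    rw [hgx, hfx] at hx
    have h8 := Matrix.toEuclideanLin_apply_piLp_toLp Wᴴ (B *ᵥ x)
    simp only [WithLp.equiv_symm_apply] at hx
    rw [hWH, hx] at h8
    exact ((WithLp.equiv 2 (Fin d → ℂ)).symm.injective h8).symm



/-- Two pure-state ensembles with the same Gram matrix have
identical measurement statistics: for any POVM on the first, there is a POVM on
the second giving the same joint probabilities. -/
theorem same_gram_same_statistics
    (d d' N : ℕ) (ψ : Fin N → (Fin d → ℂ)) (φ : Fin N → (Fin d' → ℂ))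
    (η η' : Fin N → ℝ)
    (hψ : ∀ k, star (ψ k) ⬝ᵥ ψ k = 1)
    (hφ : ∀ k, star (φ k) ⬝ᵥ φ k = 1)
    (hη : ∀ k, 0 ≤ η k) (hηsum : ∑ k, η k = 1)
    (hη' : ∀ k, 0 ≤ η' k) (hη'sum : ∑ k, η' k = 1)
    (hGram : ∀ k l,
      (Real.sqrt (η k * η l) : ℂ) * (star (ψ k) ⬝ᵥ ψ l) =
      (Real.sqrt (η' k * η' l) : ℂ) * (star (φ k) ⬝ᵥ φ l))
    (P : Fin N → Matrix (Fin d) (Fin d) ℂ)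
    (hP : ∀ k, (P k).PosSemidef)
    (hPsum : (1 - ∑ k, P k).PosSemidef) :
    ∃ Q : Fin N → Matrix (Fin d') (Fin d') ℂ,
      (∀ k, (Q k).PosSemidef) ∧ (1 - ∑ k, Q k).PosSemidef ∧
      ∀ k l, (η k : ℂ) * (star (ψ k) ⬝ᵥ (P l *ᵥ ψ k)) =
        (η' k : ℂ) * (star (φ k) ⬝ᵥ (Q l *ᵥ φ k)) := by
  classical
  set A : Matrix (Fin d) (Fin N) ℂ :=
    Matrix.of (fun i k => (Real.sqrt (η k) : ℂ) * ψ k i) with hA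
  set B : Matrix (Fin d') (Fin N) ℂ :=
    Matrix.of (fun i k => (Real.sqrt (η' k) : ℂ) * φ k i) with hB
  have hAB : Aᴴ * A = Bᴴ * B := by
    ext k l
    have h1 : (Aᴴ * A) k l =
        (Real.sqrt (η k) : ℂ) * (Real.sqrt (η l) : ℂ) * (star (ψ k) ⬝ᵥ ψ l) := by
      simp only [Matrix.mul_apply, Matrix.conjTranspose_apply, hA, Matrix.of_apply,
        dotProduct, Pi.star_apply, star_mul', Complex.star_def, Complex.conj_ofReal,
        RCLike.star_def, Finset.mul_sum]
      refine Finset.sum_congr rfl fun i _ => by ring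
    have h2 : (Bᴴ * B) k l =
        (Real.sqrt (η' k) : ℂ) * (Real.sqrt (η' l) : ℂ) * (star (φ k) ⬝ᵥ φ l) := by
      simp only [Matrix.mul_apply, Matrix.conjTranspose_apply, hB, Matrix.of_apply,
        dotProduct, Pi.star_apply, star_mul', Complex.star_def, Complex.conj_ofReal,
        RCLike.star_def, Finset.mul_sum]
      refine Finset.sum_congr rfl fun i _ => by ring
    rw [h1, h2]
    have e1 : (Real.sqrt (η k) : ℂ) * (Real.sqrt (η l) : ℂ)
        = (Real.sqrt (η k * η l) : ℂ) := by
      rw [Real.sqrt_mul (hη k)]; push_cast; ring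
    have e2 : (Real.sqrt (η' k) : ℂ) * (Real.sqrt (η' l) : ℂ)
        = (Real.sqrt (η' k * η' l) : ℂ) := by
      rw [Real.sqrt_mul (hη' k)]; push_cast; ring
    rw [e1, e2]
    exact hGram k l
  obtain ⟨W, hW1, hW2⟩ := exists_contraction_matrix d d' N A B hAB
  refine ⟨fun l => W * P l * Wᴴ, fun l => (hP l).mul_mul_conjTranspose_same W, ?_, ?_⟩
  · have hsum : ∑ k, W * P k * Wᴴ = W * (∑ k, P k) * Wᴴ := by
      simp [Finset.sum_mul, Finset.mul_sum, Matrix.sum_mul, Matrix.mul_sum]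
    have hdecomp : (1 : Matrix (Fin d') (Fin d') ℂ) - ∑ k, W * P k * Wᴴ
        = (1 - W * Wᴴ) + W * (1 - ∑ k, P k) * Wᴴ := by
      rw [hsum, Matrix.mul_sub, Matrix.sub_mul, Matrix.mul_one]
      abel
    rw [hdecomp]
    exact hW1.add (hPsum.mul_mul_conjTranspose_same W)
  · intro k l
    have quad : ∀ (u : Fin d' → ℂ),
        star u ⬝ᵥ ((W * P l * Wᴴ) *ᵥ u) = star (Wᴴ *ᵥ u) ⬝ᵥ (P l *ᵥ (Wᴴ *ᵥ u)) := by
      intro u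
      rw [show W * P l * Wᴴ = (Wᴴ)ᴴ * P l * Wᴴ by rw [conjTranspose_conjTranspose]]
      simp only [star_mulVec, dotProduct_mulVec, vecMul_vecMul]
    have colA : A *ᵥ Pi.single k 1 = (Real.sqrt (η k) : ℂ) • ψ k := by
      ext i; simp [Matrix.mulVec_single, hA]
    have colB : B *ᵥ Pi.single k 1 = (Real.sqrt (η' k) : ℂ) • φ k := by
      ext i; simp [Matrix.mulVec_single, hB]
    have hcol : Wᴴ *ᵥ ((Real.sqrt (η' k) : ℂ) • φ k) = (Real.sqrt (η k) : ℂ) • ψ k := by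
      rw [← colA, ← colB]; exact hW2 _
    have scale : ∀ (m : ℕ) (w : Fin m → ℂ) (c : ℝ) (hc : 0 ≤ c)
        (M : Matrix (Fin m) (Fin m) ℂ),
        star ((Real.sqrt c : ℂ) • w) ⬝ᵥ (M *ᵥ ((Real.sqrt c : ℂ) • w))
          = (c : ℂ) * (star w ⬝ᵥ (M *ᵥ w)) := by
      intro m w c hc M
      rw [star_smul, Matrix.mulVec_smul, smul_dotProduct, dotProduct_smul]
      simp only [smul_eq_mul, Complex.star_def, Complex.conj_ofReal, RCLike.star_def]
      rw [← mul_assoc, ← Complex.ofReal_mul, Real.mul_self_sqrt hc]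
    calc (η k : ℂ) * (star (ψ k) ⬝ᵥ (P l *ᵥ ψ k))
        = star ((Real.sqrt (η k) : ℂ) • ψ k) ⬝ᵥ (P l *ᵥ ((Real.sqrt (η k) : ℂ) • ψ k)) :=
          (scale d (ψ k) (η k) (hη k) (P l)).symm
      _ = star (Wᴴ *ᵥ ((Real.sqrt (η' k) : ℂ) • φ k)) ⬝ᵥ
            (P l *ᵥ (Wᴴ *ᵥ ((Real.sqrt (η' k) : ℂ) • φ k))) := by rw [hcol]
      _ = star ((Real.sqrt (η' k) : ℂ) • φ k) ⬝ᵥ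
            ((W * P l * Wᴴ) *ᵥ ((Real.sqrt (η' k) : ℂ) • φ k)) := (quad _).symm
      _ = (η' k : ℂ) * (star (φ k) ⬝ᵥ ((W * P l * Wᴴ) *ᵥ φ k)) :=
          scale d' (φ k) (η' k) (hη' k) (W * P l * Wᴴ)
end
end

section
/- Let 𝒢 be a finite group, let G be a positive semidefinite 𝒢×𝒢 complex matrix lying in the ℂ-linear span of the right-regular representation matrices {R_g : g ∈ 𝒢}, let S be the positive semidefinite square root of G, and for each h ∈ 𝒢 let φ_h ∈ ℂ^𝒢 be the h-th column of S, i.e. φ_h = Σ_{l∈𝒢} S_{l,h} e_l in the standard basis {e_l}. Then ⟨φ_g, φ_h⟩ = G_{g,h} for all g, h ∈ 𝒢, and L_g φ_h = φ_{gh} for all g, h ∈ 𝒢; in particular, every positive semidefinite matrix in the span of {R_g} is the Gram matrix of an ensemble generated by a unitary representation of 𝒢 acting on a single seed vector. -/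
open Matrix BigOperators
open scoped ComplexOrder

private lemma sum_ite_one_mul {α : Type*} [Fintype α] [DecidableEq α] (c₀ : α)
    (P : α → Prop) [DecidablePred P] (hP : ∀ c, P c ↔ c = c₀) (f : α → ℂ) :
    ∑ c, (if P c then 1 else 0) * f c = f c₀ := by
  simp_rw [hP]
  simp

private lemma sum_mul_ite_one {α : Type*} [Fintype α] [DecidableEq α] (c₀ : α)
    (P : α → Prop) [DecidablePred P] (hP : ∀ c, P c ↔ c = c₀) (f : α → ℂ) :
    ∑ c, f c * (if P c then 1 else 0) = f c₀ := by
  simp_rw [hP]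
  simp

/-- Let `G` be a positive semidefinite `𝒢 × 𝒢` matrix in the
span of the right-regular representation matrices, `S` its positive
semidefinite square root, and `φ h` the `h`-th column of `S`. Then
`⟨φ g, φ h⟩ = G g h` and `L g *ᵥ φ h = φ (g * h)`; in particular every PSD
matrix in the span of the `R g` is the Gram matrix of a group-generated
ensemble (transforming under the left-regular representation). -/
theorem columns_of_sqrt_gram_are_group_generated_ensemble
    (𝒢 : Type*) [Group 𝒢] [Fintype 𝒢] [DecidableEq 𝒢]
    (L R : 𝒢 → Matrix 𝒢 𝒢 ℂ)
    (hL : ∀ g r c, L g r c = if g = r * c⁻¹ then 1 else 0)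
    (hR : ∀ g r c, R g r c = if g = r⁻¹ * c then 1 else 0)
    (G : Matrix 𝒢 𝒢 ℂ) (hG : G.PosSemidef)
    (hGspan : G ∈ Submodule.span ℂ (Set.range R))
    (S : Matrix 𝒢 𝒢 ℂ) (hS : S.PosSemidef) (hSsq : S * S = G)
    (φ : 𝒢 → (𝒢 → ℂ)) (hφ : ∀ h l, φ h l = S l h) :
    (∀ g h, star (φ g) ⬝ᵥ φ h = G g h) ∧
    (∀ g h, L g *ᵥ φ h = φ (g * h)) := by
  have hLmul : ∀ g h : 𝒢, L g * L h = L (g * h) := by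
    intro g h
    ext r c
    simp only [Matrix.mul_apply, hL]
    rw [sum_ite_one_mul (g⁻¹ * r) _ (fun m => ?_)]
    · refine if_congr ?_ rfl rfl
      constructor
      · intro hh; rw [hh]; group
      · intro hh
        apply mul_left_cancel (a := g)
        rw [hh]; group
    · constructor
      · intro hh
        apply mul_left_cancel (a := g⁻¹)
        rw [hh]; group
      · intro hh; rw [hh]; group
  have hLone : L 1 = 1 := by
    ext r c
    simp only [hL, Matrix.one_apply]
    refine if_congr ?_ rfl rfl
    constructor
    · intro hh
      have := hh.symm
      rwa [mul_inv_eq_one] at this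
    · intro hh; rw [hh]; group
  have hLH : ∀ g : 𝒢, (L g)ᴴ = L g⁻¹ := by
    intro g
    ext r c
    simp only [Matrix.conjTranspose_apply, hL]
    have key : (g = c * r⁻¹) ↔ (g⁻¹ = r * c⁻¹) := by
      constructor
      · intro hh; rw [hh]; group
      · intro hh; rw [← inv_inv g, hh]; group
    by_cases h : g = c * r⁻¹
    · rw [if_pos h, if_pos (key.mp h)]; simp
    · rw [if_neg h, if_neg (fun hh => h (key.mpr hh))]; simp
  -- L g commutes with every R k
  have hLR : ∀ g k : 𝒢, L g * R k = R k * L g := by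
    intro g k
    ext r c
    simp only [Matrix.mul_apply, hL, hR]
    rw [sum_ite_one_mul (g⁻¹ * r) _ (fun m => ?_),
        sum_ite_one_mul (r * k) _ (fun m => ?_)]
    · refine if_congr ?_ rfl rfl
      constructor
      · intro hh; rw [hh]; group
      · intro hh; rw [hh]; group
    · constructor
      · intro hh; rw [hh]; group
      · intro hh; rw [hh]; group
    · constructor
      · intro hh
        apply mul_left_cancel (a := g⁻¹)
        rw [hh]; group
      · intro hh; rw [hh]; group
  -- hence L g commutes with everything in the span, in particular with G
  have hLG : ∀ g : 𝒢, ∀ M ∈ Submodule.span ℂ (Set.range R), L g * M = M * L g := by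
    intro g M hM
    induction hM using Submodule.span_induction with
    | mem x hx =>
      obtain ⟨k, rfl⟩ := hx
      exact hLR g k
    | zero => simp
    | add x y _ _ hx hy => rw [mul_add, add_mul, hx, hy]
    | smul a x _ hx => rw [mul_smul_comm, smul_mul_assoc, hx]
  -- L g commutes with S, by uniqueness of PSD square roots
  have hLS : ∀ g : 𝒢, L g * S = S * L g := by
    intro g
    have hinv1 : L g * L g⁻¹ = 1 := by rw [hLmul]; simp [hLone]
    have hinv2 : L g⁻¹ * L g = 1 := by rw [hLmul]; simp [hLone]
    have hTpsd : (L g * S * L g⁻¹).PosSemidef := by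
      have := hS.mul_mul_conjTranspose_same (L g)
      rwa [hLH g] at this
    have hTsq : (L g * S * L g⁻¹) ^ 2 = S ^ 2 := by
      rw [pow_two, pow_two]
      calc (L g * S * L g⁻¹) * (L g * S * L g⁻¹)
          = L g * S * (L g⁻¹ * L g) * S * L g⁻¹ := by noncomm_ring
        _ = L g * (S * S) * L g⁻¹ := by rw [hinv2]; noncomm_ring
        _ = L g * G * L g⁻¹ := by rw [hSsq]
        _ = G * (L g * L g⁻¹) := by rw [hLG g G hGspan]; noncomm_ring
        _ = S * S := by rw [hinv1, hSsq]; simp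
    have hTS : L g * S * L g⁻¹ = S := by
      open scoped MatrixOrder in
      exact (CFC.sq_eq_sq_iff _ _ hTpsd.nonneg hS.nonneg).mp hTsq
    calc L g * S = L g * S * (L g⁻¹ * L g) := by rw [hinv2]; simp [Matrix.mul_assoc]
      _ = (L g * S * L g⁻¹) * L g := by noncomm_ring
      _ = S * L g := by rw [hTS]
  constructor
  · intro g h
    have : star (φ g) ⬝ᵥ φ h = (Sᴴ * S) g h := by
      simp only [Matrix.mul_apply, Matrix.conjTranspose_apply, dotProduct, Pi.star_apply, hφ]
    rw [this, hS.1, hSsq]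
  · intro g h
    funext r
    have h1 : (L g *ᵥ φ h) r = (L g * S) r h := by
      simp only [Matrix.mulVec, Matrix.mul_apply, dotProduct]
      congr 1
      ext c
      rw [hφ]
    have h2 : (S * L g) r h = S r (g * h) := by
      simp only [Matrix.mul_apply, hL]
      rw [sum_mul_ite_one (g * h) _ (fun m => ?_)]
      constructor
      · intro hh; rw [hh]; group
      · intro hh; rw [hh]; group
    rw [h1, hLS g, h2, hφ]
end

section
/- Let U be a unitary projective representation of a finite group 𝒢 with unimodular multiplier ω on ℂ^d, where ω satisfies ω(g, g⁻¹) = 1 for all g ∈ 𝒢. Let ψ ∈ ℂ^d and set ψ_g := U_g ψ. Then the 𝒢×𝒢 Gram matrix G with entries G_{g,h} = ⟨ψ_g, ψ_h⟩ satisfies G = Σ_{l∈𝒢} ⟨ψ, ψ_l⟩ conj(R_l), where R_l are the projective right-regular representation matrices with multiplier ω; in particular G lies in the ℂ-linear span of {conj(R_l) : l ∈ 𝒢}. -/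
open Matrix BigOperators

/-- For an ensemble `ψ_g = U_g ψ` generated by a unitary
projective representation `U` of a finite group `𝒢` with unimodular multiplier
`ω` satisfying `ω(g, g⁻¹) = 1`, the Gram matrix `Gram g h = ⟨ψ_g, ψ_h⟩` equals
`∑ l, ⟨ψ, ψ_l⟩ • conj (R l)`, where `R l` are the projective right-regular
representation matrices; in particular it lies in the span of the
`conj (R l)`. -/
theorem projective_gram_in_span_of_conj_right_regular
    (𝒢 : Type*) [Group 𝒢] [Fintype 𝒢] [DecidableEq 𝒢] (d : ℕ)
    (ω : 𝒢 → 𝒢 → ℂ)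
    (hω0 : ∀ g h, ω g h ≠ 0)
    (hωassoc : ∀ g h f, ω g h * ω (g * h) f = ω g (h * f) * ω h f)
    (hωe : ∀ g, ω g 1 = 1 ∧ ω 1 g = 1)
    (hωuni : ∀ g h, ‖ω g h‖ = 1)
    (hωinv : ∀ g : 𝒢, ω g g⁻¹ = 1)
    (U : 𝒢 → Matrix (Fin d) (Fin d) ℂ)
    (hU : ∀ g, U g ∈ unitary (Matrix (Fin d) (Fin d) ℂ))
    (hUe : U 1 = 1)
    (hUmul : ∀ g h, U g * U h = ω g h • U (g * h))
    (ψ : Fin d → ℂ)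
    (R : 𝒢 → Matrix 𝒢 𝒢 ℂ)
    (hR : ∀ g r c, R g r c = if r = c * g⁻¹ then ω g c⁻¹ else 0)
    (Gram : Matrix 𝒢 𝒢 ℂ)
    (hGram : ∀ g h, Gram g h = star (U g *ᵥ ψ) ⬝ᵥ (U h *ᵥ ψ)) :
    Gram = ∑ l : 𝒢, (star ψ ⬝ᵥ (U l *ᵥ ψ)) • (R l).map (starRingEnd ℂ) ∧
    Gram ∈ Submodule.span ℂ (Set.range fun l => (R l).map (starRingEnd ℂ)) := by
  have hconj : ∀ g h, (starRingEnd ℂ) (ω g h) = (ω g h)⁻¹ := by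
    intro g h
    refine eq_inv_of_mul_eq_one_left ?_
    have := Complex.mul_conj (ω g h)
    rw [mul_comm] at this
    rw [this, Complex.normSq_eq_norm_sq, hωuni, one_pow, Complex.ofReal_one]
  have hsU : ∀ g : 𝒢, star (U g) = U g⁻¹ := by
    intro g
    have h1 : U g * U g⁻¹ = 1 := by
      rw [hUmul, hωinv, mul_inv_cancel, hUe, one_smul]
    have h2 : star (U g) * U g = 1 := (hU g).1
    calc star (U g) = star (U g) * (U g * U g⁻¹) := by rw [h1, mul_one]
      _ = (star (U g) * U g) * U g⁻¹ := by rw [mul_assoc]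
      _ = U g⁻¹ := by rw [h2, one_mul]
  have key : Gram = ∑ l : 𝒢, (star ψ ⬝ᵥ (U l *ᵥ ψ)) • (R l).map (starRingEnd ℂ) := by
    ext g h
    have hcond : ∀ l : 𝒢, (g = h * l⁻¹) = (l = g⁻¹ * h) := by
      intro l
      apply propext
      constructor
      · intro hl; rw [hl]; group
      · intro hl; rw [hl]; group
    have hone : ω g⁻¹ h * ω (g⁻¹ * h) h⁻¹ = 1 := by
      have := hωassoc g⁻¹ h h⁻¹
      rwa [mul_inv_cancel, (hωe g⁻¹).1, hωinv, one_mul] at this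
    have hUU : (U g)ᴴ * U h = ω g⁻¹ h • U (g⁻¹ * h) := by
      rw [← Matrix.star_eq_conjTranspose, hsU, hUmul]
    rw [hGram, Matrix.star_mulVec, Matrix.dotProduct_mulVec, Matrix.vecMul_vecMul,
      ← Matrix.dotProduct_mulVec, hUU, Matrix.smul_mulVec, dotProduct_smul]
    rw [Matrix.sum_apply]
    simp only [Matrix.smul_apply, Matrix.map_apply, hR, apply_ite (starRingEnd ℂ), map_zero,
      smul_eq_mul, mul_ite, mul_zero, hcond]
    rw [Finset.sum_ite_eq' Finset.univ (g⁻¹ * h)]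
    simp only [Finset.mem_univ, if_true, hconj]
    rw [eq_inv_of_mul_eq_one_left hone]
    ring
  exact ⟨key, key ▸ Submodule.sum_mem _ fun l _ =>
    Submodule.smul_mem _ _ (Submodule.subset_span ⟨l, rfl⟩)⟩
end

section
/- Let ω be a unimodular multiplier on a finite group 𝒢 satisfying ω(f, f⁻¹) = 1 for all f ∈ 𝒢, and let G be a positive semidefinite 𝒢×𝒢 complex matrix lying in the ℂ-linear span of {conj(R_f) : f ∈ 𝒢}, where R_f are the projective right-regular representation matrices with multiplier ω. Let S be the positive semidefinite square root of G and, for each h ∈ 𝒢, let φ_h ∈ ℂ^𝒢 be the h-th column of S. Then ⟨φ_g, φ_h⟩ = G_{g,h} for all g, h ∈ 𝒢, and L_g φ_h = ω(g,h) φ_{gh} for all g, h ∈ 𝒢, where L_g are the projective left-regular representation matrices with multiplier ω. -/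
open Matrix BigOperators
open scoped ComplexOrder

lemma commute_sqrt_of_commute {n : Type*} [Fintype n] [DecidableEq n]
    {A G S : Matrix n n ℂ} (hS : S.PosSemidef) (hSsq : S * S = G) (h : A * G = G * A) :
    A * S = S * A := by
  set U : Matrix n n ℂ := (hS.1.eigenvectorUnitary : Matrix n n ℂ) with hU
  have hUU : star U * U = 1 := mem_unitaryGroup_iff'.mp hS.1.eigenvectorUnitary.2
  have hUU' : U * star U = 1 := mem_unitaryGroup_iff.mp hS.1.eigenvectorUnitary.2
  set E : Matrix n n ℂ := diagonal (RCLike.ofReal ∘ hS.1.eigenvalues) with hE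
  set D : Matrix n n ℂ := E * E with hD
  have hsqrt : S = U * E * star U := by
    conv_lhs => rw [hS.1.spectral_theorem]
    simp [Unitary.conjStarAlgAut_apply, hU, hE]
  have key : ∀ X Y : Matrix n n ℂ, (U * X * star U) * (U * Y * star U) = U * (X * Y) * star U := by
    intro X Y
    calc (U * X * star U) * (U * Y * star U) = U * X * (star U * U) * (Y * star U) := by
          simp only [Matrix.mul_assoc]
      _ = U * (X * Y) * star U := by rw [hUU]; simp only [Matrix.mul_assoc, Matrix.mul_one]
  have hGspec : G = U * D * star U := by rw [← hSsq, hsqrt, key]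
  set B : Matrix n n ℂ := star U * A * U with hB
  have hA' : U * B * star U = A := by
    calc U * (star U * A * U) * star U = (U * star U) * A * (U * star U) := by
          simp only [Matrix.mul_assoc]
      _ = A := by rw [hUU']; simp
  have hBD : B * D = D * B := by
    have h2 : (U * B * star U) * (U * D * star U) = (U * D * star U) * (U * B * star U) := by
      rw [hA', ← hGspec]; exact h
    rw [key, key] at h2
    have key2 : ∀ X : Matrix n n ℂ, star U * (U * X * star U) * U = X := by
      intro X
      calc star U * (U * X * star U) * U = (star U * U) * X * (star U * U) := by
            simp only [Matrix.mul_assoc]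
        _ = X := by rw [hUU]; simp
    have h3 := congrArg (fun M => star U * M * U) h2
    simpa only [key2] using h3
  have hBE : B * E = E * B := by
    ext i j
    rw [hE, mul_diagonal, diagonal_mul]
    have hd := congrFun (congrFun hBD i) j
    rw [hD, hE, diagonal_mul_diagonal, mul_diagonal, diagonal_mul] at hd
    simp only [Function.comp_apply] at hd
    by_cases hb : B i j = 0
    · simp [hb]
    · have h5 : B i j * ((RCLike.ofReal (hS.1.eigenvalues j) : ℂ) * RCLike.ofReal (hS.1.eigenvalues j))
          = B i j * ((RCLike.ofReal (hS.1.eigenvalues i) : ℂ) * RCLike.ofReal (hS.1.eigenvalues i)) := by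
        rw [hd, mul_comm]
      have h6 := mul_left_cancel₀ hb h5
      have h7 : hS.1.eigenvalues j * hS.1.eigenvalues j = hS.1.eigenvalues i * hS.1.eigenvalues i := by
        exact_mod_cast h6
      have hi := hS.eigenvalues_nonneg i
      have hj := hS.eigenvalues_nonneg j
      have heq : hS.1.eigenvalues j = hS.1.eigenvalues i := by nlinarith
      simp [Function.comp, heq, mul_comm]
  calc A * S = (U * B * star U) * (U * E * star U) := by rw [hA', ← hsqrt]
    _ = U * (B * E) * star U := key _ _
    _ = U * (E * B) * star U := by rw [hBE]
    _ = (U * E * star U) * (U * B * star U) := (key _ _).symm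
    _ = S * A := by rw [hA', ← hsqrt]


/-- Let `ω` be a unimodular multiplier with `ω(f, f⁻¹) = 1`,
`G` a PSD matrix in the span of the conjugated projective right-regular
representation matrices, `S` its positive semidefinite square root, and `φ h`
the `h`-th column of `S`. Then `⟨φ g, φ h⟩ = G g h` and
`L g *ᵥ φ h = ω g h • φ (g * h)`. -/
theorem columns_of_sqrt_projective_gram
    (𝒢 : Type*) [Group 𝒢] [Fintype 𝒢] [DecidableEq 𝒢]
    (ω : 𝒢 → 𝒢 → ℂ)
    (hω0 : ∀ g h, ω g h ≠ 0)
    (hωassoc : ∀ g h f, ω g h * ω (g * h) f = ω g (h * f) * ω h f)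
    (hωe : ∀ g, ω g 1 = 1 ∧ ω 1 g = 1)
    (hωuni : ∀ g h, ‖ω g h‖ = 1)
    (hωinv : ∀ f : 𝒢, ω f f⁻¹ = 1)
    (L R : 𝒢 → Matrix 𝒢 𝒢 ℂ)
    (hL : ∀ g r c, L g r c = if r = g * c then ω g c else 0)
    (hR : ∀ g r c, R g r c = if r = c * g⁻¹ then ω g c⁻¹ else 0)
    (G : Matrix 𝒢 𝒢 ℂ) (hG : G.PosSemidef)
    (hGspan : G ∈ Submodule.span ℂ (Set.range fun f => (R f).map (starRingEnd ℂ)))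
    (S : Matrix 𝒢 𝒢 ℂ) (hS : S.PosSemidef) (hSsq : S * S = G)
    (φ : 𝒢 → (𝒢 → ℂ)) (hφ : ∀ h l, φ h l = S l h) :
    (∀ g h, star (φ g) ⬝ᵥ φ h = G g h) ∧
    (∀ g h, L g *ᵥ φ h = ω g h • φ (g * h)) := by
  -- conjugate of ω is its inverse
  have hconj : ∀ g h, (starRingEnd ℂ) (ω g h) = (ω g h)⁻¹ := by
    intro g h
    rw [Complex.inv_def, Complex.normSq_eq_norm_sq, hωuni]
    simp
  -- ω(f⁻¹, f) = 1
  have hinv' : ∀ f : 𝒢, ω f⁻¹ f = 1 := by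
    intro f
    have h1 := hωassoc f f⁻¹ f
    simp only [mul_inv_cancel, inv_mul_cancel, hωinv, (hωe f).1, (hωe f).2,
      one_mul, mul_one] at h1
    exact h1.symm
  -- ω(f⁻¹, f·y) ω(f, y) = 1
  have hB : ∀ f y : 𝒢, ω f⁻¹ (f * y) * ω f y = 1 := by
    intro f y
    have h1 := hωassoc f⁻¹ f y
    simpa only [inv_mul_cancel, hinv', (hωe y).2, one_mul] using h1.symm
  -- key: ω(x, f⁻¹) ω(f, x⁻¹) = 1
  have key2 : ∀ f x : 𝒢, ω x f⁻¹ * ω f x⁻¹ = 1 := by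
    intro f x
    have h1 := hωassoc x f⁻¹ (f * x⁻¹)
    have e1 : f⁻¹ * (f * x⁻¹) = x⁻¹ := by group
    have e2 : f * x⁻¹ = (x * f⁻¹)⁻¹ := by group
    rw [e1, hωinv, one_mul] at h1
    rw [show ω (x * f⁻¹) (f * x⁻¹) = 1 by rw [e2]; exact hωinv _, mul_one] at h1
    -- h1 : ω x f⁻¹ = ω f⁻¹ (f * x⁻¹)
    have := hB f x⁻¹
    rw [← h1] at this
    exact this
  -- L g commutes with conj (R f)
  have hcommR : ∀ g f : 𝒢, L g * (R f).map (starRingEnd ℂ) = (R f).map (starRingEnd ℂ) * L g := by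
    intro g f
    ext r c
    have hLS : ∀ r k : 𝒢, L g r k = if k = g⁻¹ * r then ω g k else 0 := by
      intro r k
      rw [hL]
      by_cases hk : k = g⁻¹ * r
      · subst hk; rw [if_pos (by group), if_pos rfl]
      · rw [if_neg, if_neg hk]
        intro h; exact hk (by rw [h]; group)
    rw [mul_apply, mul_apply]
    have lhs : ∑ k, L g r k * ((R f).map (starRingEnd ℂ)) k c
        = ω g (g⁻¹ * r) * (starRingEnd ℂ) (R f (g⁻¹ * r) c) := by
      simp only [hLS, map_apply, ite_mul, zero_mul, Finset.sum_ite_eq',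
        Finset.mem_univ, if_true]
    have rhs : ∑ k, ((R f).map (starRingEnd ℂ)) r k * L g k c
        = (starRingEnd ℂ) (R f r (g * c)) * ω g c := by
      simp only [hL, map_apply, mul_ite, mul_zero, Finset.sum_ite_eq',
        Finset.mem_univ, if_true]
    rw [lhs, rhs, hR, hR]
    by_cases hrc : r = g * c * f⁻¹
    · have hrc' : g⁻¹ * r = c * f⁻¹ := by rw [hrc]; group
      rw [if_pos hrc', apply_ite (starRingEnd ℂ), map_zero, if_pos hrc, hrc']
      rw [hconj, hconj]
      have e2 : (ω f c⁻¹)⁻¹ = ω c f⁻¹ := inv_eq_of_mul_eq_one_left (key2 f c)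
      have e3 : (ω f (g * c)⁻¹)⁻¹ = ω (g * c) f⁻¹ := inv_eq_of_mul_eq_one_left (key2 f (g * c))
      rw [e2, e3]
      linear_combination -hωassoc g c f⁻¹
    · have hrc' : ¬ (g⁻¹ * r = c * f⁻¹) := by
        intro h; exact hrc (by rw [mul_assoc, ← h]; group)
      rw [if_neg hrc', apply_ite (starRingEnd ℂ), map_zero, if_neg hrc]
      simp
  -- L g commutes with G
  have hcommG : ∀ g : 𝒢, L g * G = G * L g := by
    intro g
    refine Submodule.span_induction (p := fun x _ => L g * x = x * L g) ?_ ?_ ?_ ?_ hGspan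
    · rintro x ⟨f, rfl⟩
      exact hcommR g f
    · simp
    · intro x y _ _ hx hy
      rw [mul_add, hx, hy, add_mul]
    · intro a x _ hx
      rw [mul_smul_comm, hx, smul_mul_assoc]
  -- S is the canonical positive semidefinite square root of G
  have hcommS : ∀ g : 𝒢, L g * S = S * L g := by
    intro g
    exact commute_sqrt_of_commute hS hSsq (hcommG g)
  constructor
  · intro g h
    have hH : ∀ a b, star (S b a) = S a b := by
      intro a b
      conv_rhs => rw [← hS.1]
      simp [conjTranspose_apply]
    calc star (φ g) ⬝ᵥ φ h = ∑ l, S g l * S l h := by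
          simp only [dotProduct, Pi.star_apply, hφ, hH]
      _ = (S * S) g h := (Matrix.mul_apply).symm
      _ = G g h := by rw [hSsq]
  · intro g h
    funext r
    have h1 : (L g *ᵥ φ h) r = (L g * S) r h := by
      simp [mulVec, dotProduct, Matrix.mul_apply, hφ]
    have h2 : (S * L g) r h = ω g h * S r (g * h) := by
      rw [Matrix.mul_apply]
      simp only [hL, mul_ite, mul_zero, Finset.sum_ite_eq', Finset.mem_univ, if_true]
      ring
    rw [h1, hcommS g, h2]
    simp [hφ]
end

section
/- Let V be a finite-dimensional complex inner product space, I a finite index set, and {ξ₀} ∪ {ξ_i}_{i∈I} an orthonormal family in V. Let β₀ > 0 and β_i > 0 for i ∈ I, let d_i ≥ 1 be natural numbers, set Δ := Σ_{i∈I} d_i β_i and ζ := β₀ − Δ, and assume ζ ≥ 0. Let ψ := β₀ ξ₀ + Σ_{i∈I} √(d_i) β_i ξ_i, and let Z be a positive semidefinite operator on V. Then the operator |ψ⟩⟨ψ| − (β₀² − Δ²) |ξ₀⟩⟨ξ₀| + ζ Σ_{i∈I} β_i ( d_i |ξ₀⟩⟨ξ₀| + |ξ_i⟩⟨ξ_i|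 ) + ζ Z is positive semidefinite. -/
open scoped ComplexOrder BigOperators

/-- The rank-one operator `|x⟩⟨x| : v ↦ ⟨x, v⟩ • x` on a complex inner product
space (inner product conjugate-linear in the first argument). -/
noncomputable def rankOne {V : Type*} [NormedAddCommGroup V] [InnerProductSpace ℂ V]
    (x : V) : V →ₗ[ℂ] V where
  toFun v := (inner ℂ x v : ℂ) • x
  map_add' u v := by simp [inner_add_right, add_smul]
  map_smul' c v := by simp [inner_smul_right, smul_smul]

/-- An operator `T` is positive semidefinite if it is self-adjoint (symmetric)
and `⟨v, T v⟩ ≥ 0` for all `v`. -/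
def IsPosSemidefOp {V : Type*} [NormedAddCommGroup V] [InnerProductSpace ℂ V]
    (T : V →ₗ[ℂ] V) : Prop :=
  (∀ x y : V, (inner ℂ (T x) y : ℂ) = inner ℂ x (T y)) ∧ ∀ v : V, 0 ≤ (inner ℂ v (T v) : ℂ)

lemma rankOne_apply {V : Type*} [NormedAddCommGroup V] [InnerProductSpace ℂ V]
    (x v : V) : rankOne x v = (inner ℂ x v : ℂ) • x := rfl

lemma rankOne_symm {V : Type*} [NormedAddCommGroup V] [InnerProductSpace ℂ V]
    (x u w : V) : (inner ℂ (rankOne x u) w : ℂ) = inner ℂ u (rankOne x w) := by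
  simp only [rankOne_apply, inner_smul_left, inner_smul_right]
  rw [← inner_conj_symm u x]
  ring

lemma inner_rankOne_self {V : Type*} [NormedAddCommGroup V] [InnerProductSpace ℂ V]
    (x v : V) : (inner ℂ v (rankOne x v) : ℂ) = (Complex.normSq (inner ℂ x v) : ℝ) := by
  simp only [rankOne_apply, inner_smul_right]
  rw [← inner_conj_symm x v, Complex.normSq_conj, mul_comm, Complex.mul_conj]

/-- With `{ξ₀} ∪ {ξ i}` orthonormal, `β₀, β i > 0`,
`d i ≥ 1`, `Δ = ∑ d i * β i`, `ζ = β₀ - Δ ≥ 0`,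
`ψ = β₀ ξ₀ + ∑ √(d i) β i ξ i` and `Z` positive semidefinite, the operator
`|ψ⟩⟨ψ| - (β₀² - Δ²)|ξ₀⟩⟨ξ₀| + ζ ∑ β i (d i |ξ₀⟩⟨ξ₀| + |ξ i⟩⟨ξ i|) + ζ Z`
is positive semidefinite. -/
theorem min_error_exclusion_dual_operator_posSemidef
    {V : Type*} [NormedAddCommGroup V] [InnerProductSpace ℂ V]
    [FiniteDimensional ℂ V]
    {I : Type*} [Fintype I]
    (ξ : Option I → V) (hξ : Orthonormal ℂ ξ)
    (β₀ : ℝ) (β : I → ℝ) (hβ₀ : 0 < β₀) (hβ : ∀ i, 0 < β i)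
    (d : I → ℕ) (hd : ∀ i, 1 ≤ d i)
    (Δ : ℝ) (hΔ : Δ = ∑ i, (d i : ℝ) * β i)
    (ζ : ℝ) (hζdef : ζ = β₀ - Δ) (hζ : 0 ≤ ζ)
    (ψ : V)
    (hψ : ψ = (β₀ : ℂ) • ξ none + ∑ i, ((Real.sqrt (d i) * β i : ℝ) : ℂ) • ξ (some i))
    (Z : V →ₗ[ℂ] V) (hZ : IsPosSemidefOp Z) :
    IsPosSemidefOp
      (rankOne ψ - ((β₀ ^ 2 - Δ ^ 2 : ℝ) : ℂ) • rankOne (ξ none)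
        + (ζ : ℂ) • ∑ i, ((β i : ℝ) : ℂ) •
            ((d i : ℂ) • rankOne (ξ none) + rankOne (ξ (some i)))
        + (ζ : ℂ) • Z) := by
  obtain ⟨hZsym, hZpos⟩ := hZ
  constructor
  · intro x y
    simp only [LinearMap.add_apply, LinearMap.sub_apply, LinearMap.smul_apply,
      LinearMap.sum_apply, inner_add_left, inner_add_right, inner_sub_left, inner_sub_right,
      inner_smul_left, inner_smul_right, sum_inner, inner_sum, rankOne_symm, hZsym,
      Complex.conj_ofReal, map_natCast]
  · intro v
    set a : ℂ := inner ℂ (ξ none) v with ha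
    set b : I → ℂ := fun i => inner ℂ (ξ (some i)) v with hb
    set s : ℂ := ∑ i, ((Real.sqrt (d i) * β i : ℝ) : ℂ) * b i with hs
    set S : ℂ := inner ℂ ψ v with hSdef
    have hS : S = (β₀ : ℂ) * a + s := by
      rw [hSdef, hψ, inner_add_left, sum_inner, inner_smul_left, Complex.conj_ofReal, hs]
      congr 1
      refine Finset.sum_congr rfl fun i _ => ?_
      rw [inner_smul_left, Complex.conj_ofReal]
    set w : ℂ := inner ℂ v (Z v) with hw
    obtain ⟨hwre, hwim⟩ := Complex.le_def.1 (hZpos v)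
    simp only [Complex.zero_re, Complex.zero_im] at hwre hwim
    set r : ℝ := w.re with hr
    have hr0 : 0 ≤ r := hwre
    have hweq : w = ((r : ℝ) : ℂ) := by
      apply Complex.ext
      · simp [hr]
      · rw [Complex.ofReal_im, hw, ← hwim]
    -- reduce goal to a real inequality
    have key : (inner ℂ v ((rankOne ψ - ((β₀ ^ 2 - Δ ^ 2 : ℝ) : ℂ) • rankOne (ξ none)
        + (ζ : ℂ) • ∑ i, ((β i : ℝ) : ℂ) •
            ((d i : ℂ) • rankOne (ξ none) + rankOne (ξ (some i)))
        + (ζ : ℂ) • Z) v) : ℂ)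
        = ((Complex.normSq S - (β₀ ^ 2 - Δ ^ 2) * Complex.normSq a
            + ζ * ∑ i, β i * ((d i : ℝ) * Complex.normSq a + Complex.normSq (b i))
            + ζ * r : ℝ) : ℂ) := by
      simp only [LinearMap.add_apply, LinearMap.sub_apply, LinearMap.smul_apply,
        LinearMap.sum_apply, inner_add_right, inner_sub_right, inner_smul_right, inner_sum,
        inner_rankOne_self, ← ha, ← hb, ← hSdef, ← hw]
      rw [hweq]
      have hbfold : ∀ i : I, (inner ℂ (ξ (some i)) v : ℂ) = b i := fun _ => rfl
      simp only [hbfold]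
      push_cast
      ring_nf
    rw [key, Complex.zero_le_real]
    simp only [Complex.normSq_eq_norm_sq]
    set t : ℝ := ‖a‖ with ht
    set m : ℝ := ‖s‖ with hm
    set B : ℝ := ∑ i, β i * ‖b i‖ ^ 2 with hB
    have ht0 : 0 ≤ t := norm_nonneg a
    have hm0 : 0 ≤ m := norm_nonneg s
    have hB0 : 0 ≤ B := Finset.sum_nonneg fun i _ =>
      mul_nonneg (hβ i).le (sq_nonneg _)
    have hΔ0 : 0 ≤ Δ := by
      rw [hΔ]; exact Finset.sum_nonneg fun i _ =>
        mul_nonneg (Nat.cast_nonneg _) (hβ i).le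
    have hsum : ∑ i, β i * ((d i : ℝ) * t ^ 2 + ‖b i‖ ^ 2)
        = Δ * t ^ 2 + B := by
      rw [hΔ, hB, Finset.sum_mul, ← Finset.sum_add_distrib]
      exact Finset.sum_congr rfl fun i _ => by ring
    rw [hsum]
    -- Cauchy-Schwarz: m ^ 2 ≤ Δ * B
    have hml : m ≤ ∑ i, Real.sqrt (d i) * β i * ‖b i‖ := by
      rw [hm, hs]
      refine (norm_sum_le _ _).trans_eq ?_
      refine Finset.sum_congr rfl fun i _ => ?_
      rw [norm_mul, Complex.norm_real,
        Real.norm_of_nonneg (mul_nonneg (Real.sqrt_nonneg _) (hβ i).le)]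
    have hcs : m ^ 2 ≤ Δ * B := by
      have h1 : m ^ 2 ≤ (∑ i, Real.sqrt (d i) * β i * ‖b i‖) ^ 2 :=
        pow_le_pow_left₀ hm0 hml 2
      have h2 := Finset.sum_mul_sq_le_sq_mul_sq Finset.univ
        (fun i => Real.sqrt ((d i : ℝ) * β i))
        (fun i => Real.sqrt (β i) * ‖b i‖)
      have e1 : ∀ i : I, Real.sqrt ((d i : ℝ) * β i) * (Real.sqrt (β i) * ‖b i‖)
          = Real.sqrt (d i) * β i * ‖b i‖ := by
        intro i
        rw [Real.sqrt_mul (Nat.cast_nonneg _)]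
        rw [mul_assoc (Real.sqrt (d i)), ← mul_assoc (Real.sqrt (β i)),
          Real.mul_self_sqrt (hβ i).le]
        ring
      have e2 : ∀ i : I, Real.sqrt ((d i : ℝ) * β i) ^ 2 = (d i : ℝ) * β i := fun i =>
        Real.sq_sqrt (mul_nonneg (Nat.cast_nonneg _) (hβ i).le)
      have e3 : ∀ i : I, (Real.sqrt (β i) * ‖b i‖) ^ 2
          = β i * ‖b i‖ ^ 2 := by
        intro i
        rw [mul_pow, Real.sq_sqrt (hβ i).le]
      simp only [e1, e2, e3] at h2
      rw [hΔ, hB]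
      exact h1.trans h2
    -- triangle inequality on S
    have hS2 : (β₀ * t - m) ^ 2 ≤ ‖S‖ ^ 2 := by
      have h1 : |β₀ * t - m| ≤ ‖S‖ := by
        have h2 := abs_norm_sub_norm_le ((β₀ : ℂ) * a) (-s)
        rw [sub_neg_eq_add, norm_neg, ← hS] at h2
        rw [norm_mul, Complex.norm_real, Real.norm_of_nonneg hβ₀.le] at h2
        simpa [← ht, ← hm] using h2
      obtain ⟨h1l, h1r⟩ := abs_le.1 h1
      exact sq_le_sq' h1l h1r
    clear_value a b s S w r t m B
    clear hml hsum key hweq hw hS hs hb ha hSdef hψ hΔ hξ hZsym hZpos hwim hwre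
    rcases eq_or_lt_of_le hΔ0 with h0 | hΔpos
    · have hm2 : m = 0 := by
        have h3 : m ^ 2 ≤ 0 := by rw [← h0] at hcs; simpa using hcs
        nlinarith [sq_nonneg m]
      rw [hm2] at hS2
      rw [← h0]
      nlinarith [mul_nonneg hζ hB0, mul_nonneg hζ hr0, sq_nonneg t]
    · have hid : Δ * (‖S‖ ^ 2 - (β₀ ^ 2 - Δ ^ 2) * t ^ 2 + ζ * (Δ * t ^ 2 + B) + ζ * r)
          = β₀ * (Δ * t - m) ^ 2 + ζ * (Δ * B - m ^ 2) + ζ * r * Δ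
            + Δ * (‖S‖ ^ 2 - (β₀ * t - m) ^ 2) := by
        rw [hζdef]; ring
      have h1 : 0 ≤ β₀ * (Δ * t - m) ^ 2 := mul_nonneg hβ₀.le (sq_nonneg _)
      have h2 : 0 ≤ ζ * (Δ * B - m ^ 2) := mul_nonneg hζ (by linarith)
      have h3 : 0 ≤ ζ * r * Δ := mul_nonneg (mul_nonneg hζ hr0) hΔ0
      have h4 : 0 ≤ Δ * (‖S‖ ^ 2 - (β₀ * t - m) ^ 2) := mul_nonneg hΔ0 (by linarith)
      nlinarith [hid, h1, h2, h3, h4, hΔpos]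
end

section
/- Let N ≥ 2, let β : {1,…,N} → ℝ with β_p > 0 for all p, let d : {1,…,N} → ℕ with d_p ≥ 1 for all p and d_1 = 1, let ε > 0, and set Δ := Σ_{p=2}^N d_p β_p. Then there exists ν̃ > 0 such that the real symmetric N×N matrix K with entries K_{p,q} = (ν̃/ε) √(d_p d_q) β_p β_q + D_{p,q}, where D is the diagonal matrix with D_{1,1} = −β_1², D_{p,p} = β_p Δ for 1 < p < N, and D_{N,N} = β_N Δ + ε/d_N, is positive definite. -/
open Matrix BigOperators

set_option maxHeartbeats 1000000

private lemma quad_form_aux {m : ℕ} (k : ℝ) (v D x : Fin m → ℝ) :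
    ∑ p, x p * (∑ q, (k * (v p * v q) + (if p = q then D p else 0)) * x q)
      = k * (∑ p, v p * x p)^2 + ∑ p, D p * x p^2 := by
  have h1 : ∀ p, ∑ q, (k * (v p * v q) + (if p = q then D p else 0)) * x q
      = k * v p * (∑ q, v q * x q) + D p * x p := by
    intro p
    rw [Finset.sum_congr rfl (fun q _ => add_mul _ _ _), Finset.sum_add_distrib]
    congr 1
    · rw [Finset.mul_sum]; exact Finset.sum_congr rfl fun q _ => by ring
    · simp [ite_mul]
  simp_rw [h1, mul_add, Finset.sum_add_distrib]
  congr 1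
  · rw [show (∑ p, x p * (k * v p * (∑ q, v q * x q)))
        = (∑ p, v p * x p) * (k * (∑ q, v q * x q)) from by
      rw [Finset.sum_mul]; exact Finset.sum_congr rfl fun p _ => by ring]
    ring
  · exact Finset.sum_congr rfl fun p _ => by ring

private lemma core_ineq_aux (k ρ D a T : ℝ) (hT : T^2 ≤ ρ * D) (hρ0 : 0 ≤ ρ)
    (hk1 : 1 < k) (hk : 1 < k * (1 - ρ)) (hD : 0 ≤ D) (ha : 0 < a^2) :
    0 < k * (a + T)^2 + D - a^2 := by
  rcases eq_or_lt_of_le hρ0 with h | h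
  · have hT0 : T = 0 := by nlinarith [sq_nonneg T]
    subst hT0
    nlinarith [mul_pos (show (0:ℝ) < k - 1 by linarith) ha]
  · have hk' : (0:ℝ) < k * ρ + 1 := by positivity
    have h1 : (k*ρ+1) * (k*ρ*(a+T)^2 + T^2) ≥ k*ρ*a^2 := by
      nlinarith [sq_nonneg (k*ρ*(a+T) + T)]
    by_contra hG
    push_neg at hG
    have e1 : ρ*(k*ρ+1)*(k*(a+T)^2 + D - a^2) ≤ 0 :=
      mul_nonpos_of_nonneg_of_nonpos (by positivity) hG
    have e2 : (k*ρ+1)*T^2 ≤ (k*ρ+1)*(ρ*D) := by nlinarith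
    have pos : 0 < ρ*(k*(1-ρ)-1)*a^2 := mul_pos (mul_pos h (by linarith)) ha
    nlinarith [e1, e2, h1, pos]

/-- (Indices `1, …, N` with `N = n + 2 ≥ 2` are modelled by
`Fin (n + 2)`, index `0` playing the role of `1` and `Fin.last (n + 1)` the
role of `N`.) Given `β p > 0`, `d p ≥ 1` with `d 1 = 1`, `ε > 0` and
`Δ = ∑_{p ≥ 2} d p * β p`, there is `ν̃ > 0` making the matrix
`K p q = (ν̃/ε) √(d p * d q) β p β q + D p q` positive definite, where `D` is
diagonal with `D 1 1 = -β 1 ^ 2`, `D p p = β p * Δ` for `1 < p < N`, and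
`D N N = β N * Δ + ε / d N`. -/
theorem unambiguous_exclusion_dual_matrix_posDef
    (n : ℕ) (β : Fin (n + 2) → ℝ) (hβ : ∀ p, 0 < β p)
    (d : Fin (n + 2) → ℕ) (hd : ∀ p, 1 ≤ d p) (hd1 : d 0 = 1)
    (ε : ℝ) (hε : 0 < ε)
    (Δ : ℝ) (hΔ : Δ = ∑ p ∈ Finset.univ.erase 0, (d p : ℝ) * β p) :
    ∃ ν > (0 : ℝ),
      (Matrix.of fun p q : Fin (n + 2) =>
        ν / ε * Real.sqrt ((d p : ℝ) * (d q : ℝ)) * β p * β q +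
          (if p = q then
            (if p = 0 then -(β 0) ^ 2
             else β p * Δ + (if p = Fin.last (n + 1) then ε / (d p : ℝ) else 0))
           else 0)).PosDef := by
  set L : Fin (n + 2) := Fin.last (n + 1) with hLdef
  set s : Finset (Fin (n + 2)) := Finset.univ.erase 0 with hsdef
  have hL0 : L ≠ 0 := by
    intro h
    rw [hLdef] at h
    exact absurd (congrArg Fin.val h) (by simp)
  have hLs : L ∈ s := Finset.mem_erase.2 ⟨hL0, Finset.mem_univ _⟩
  have hdpos : ∀ p, (0:ℝ) < (d p : ℝ) := fun p => by
    have := hd p; exact_mod_cast Nat.lt_of_lt_of_le Nat.zero_lt_one this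
  have hΔpos : 0 < Δ := by
    rw [hΔ]
    exact Finset.sum_pos (fun p _ => mul_pos (hdpos p) (hβ p)) ⟨L, hLs⟩
  -- weights
  set w : Fin (n + 2) → ℝ :=
    fun p => β p * Δ + (if p = L then ε / (d p : ℝ) else 0) with hwdef
  have h2 : ∀ p, (0:ℝ) ≤ (if p = L then ε / (d p : ℝ) else 0) := by
    intro p
    split
    · exact le_of_lt (div_pos hε (hdpos p))
    · exact le_rfl
  have hw : ∀ p, 0 < w p := by
    intro p
    have h1 : 0 < β p * Δ := mul_pos (hβ p) hΔpos
    have : w p = β p * Δ + (if p = L then ε / (d p : ℝ) else 0) := rfl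
    rw [this]
    have := h2 p
    linarith
  have hwge : ∀ p, β p * Δ ≤ w p := by
    intro p
    have : w p = β p * Δ + (if p = L then ε / (d p : ℝ) else 0) := rfl
    rw [this]
    have := h2 p
    linarith
  have hwL : w L = β L * Δ + ε / (d L : ℝ) := by
    have : w L = β L * Δ + (if L = L then ε / (d L : ℝ) else 0) := rfl
    rw [this, if_pos rfl]
  set v : Fin (n + 2) → ℝ := fun p => Real.sqrt (d p) * β p with hvdef
  have hv2 : ∀ p, v p ^ 2 = (d p : ℝ) * β p ^ 2 := by
    intro p
    rw [hvdef]
    rw [mul_pow, Real.sq_sqrt (hdpos p).le]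
  set ρ : ℝ := ∑ p ∈ s, v p ^ 2 / w p with hρdef
  have hρ0 : 0 ≤ ρ :=
    Finset.sum_nonneg fun p _ => div_nonneg (sq_nonneg _) (hw p).le
  have hρ1 : ρ < 1 := by
    have hone : (1:ℝ) = ∑ p ∈ s, (d p : ℝ) * β p / Δ := by
      rw [← Finset.sum_div, ← hΔ, div_self hΔpos.ne']
    rw [hρdef, hone]
    refine Finset.sum_lt_sum (fun p hp => ?_) ⟨L, hLs, ?_⟩
    · rw [hv2, div_le_div_iff₀ (hw p) hΔpos]
      nlinarith [mul_le_mul_of_nonneg_left (hwge p)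
        (mul_pos (hdpos p) (hβ p)).le]
    · rw [hv2, div_lt_div_iff₀ (hw L) hΔpos, hwL]
      nlinarith [mul_pos (mul_pos (hdpos L) (hβ L)) (div_pos hε (hdpos L))]
  set k : ℝ := 1 / (1 - ρ) + 1 with hkdef
  have h1ρ : 0 < 1 - ρ := by linarith
  have hk1 : 1 < k := by
    have : 0 < 1 / (1 - ρ) := by positivity
    rw [hkdef]; linarith
  have hkρ : 1 < k * (1 - ρ) := by
    rw [hkdef]
    field_simp
    linarith
  refine ⟨ε * k, by positivity, Matrix.posDef_iff_dotProduct_mulVec.mpr ⟨?_, ?_⟩⟩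
  · -- Hermitian
    ext p q
    simp only [Matrix.conjTranspose_apply, Matrix.of_apply, star_trivial]
    by_cases hpq : p = q
    · subst hpq; ring_nf
    · rw [if_neg hpq, if_neg (Ne.symm hpq), mul_comm ((d q : ℝ)) ((d p : ℝ))]
      ring
  · intro x hx
    have hνε : ε * k / ε = k := by field_simp
    have hMq : ∀ p q : Fin (n+2),
        (Matrix.of fun p q : Fin (n + 2) =>
          ε * k / ε * Real.sqrt ((d p : ℝ) * (d q : ℝ)) * β p * β q +
            (if p = q then
              (if p = 0 then -(β 0) ^ 2
               else β p * Δ + (if p = L then ε / (d p : ℝ) else 0))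
             else 0)) p q
        = k * (v p * v q) + (if p = q then (if p = 0 then -(β 0)^2 else w p) else 0) := by
      intro p q
      simp only [Matrix.of_apply, hνε, hvdef, hwdef,
        Real.sqrt_mul (hdpos p).le]
      ring_nf
    have hQ : dotProduct (star x)
        ((Matrix.of fun p q : Fin (n + 2) =>
          ε * k / ε * Real.sqrt ((d p : ℝ) * (d q : ℝ)) * β p * β q +
            (if p = q then
              (if p = 0 then -(β 0) ^ 2
               else β p * Δ + (if p = L then ε / (d p : ℝ) else 0))
             else 0)) *ᵥ x)
        = k * (∑ p, v p * x p)^2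
          + ∑ p, (if p = 0 then -(β 0)^2 else w p) * x p^2 := by
      rw [show (star x : Fin (n+2) → ℝ) = x from star_trivial x]
      simp only [dotProduct, Matrix.mulVec, dotProduct]
      rw [← quad_form_aux k v (fun p => if p = 0 then -(β 0)^2 else w p) x]
      exact Finset.sum_congr rfl fun p _ => by
        congr 1
        exact Finset.sum_congr rfl fun q _ => by rw [hMq p q]
    rw [hQ]
    -- split sums at 0
    have hv0 : v 0 = β 0 := by
      rw [hvdef]; simp [hd1]
    set T : ℝ := ∑ p ∈ s, v p * x p with hTdef
    set a : ℝ := β 0 * x 0 with hadef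
    have hS : (∑ p, v p * x p) = a + T := by
      rw [← Finset.add_sum_erase _ _ (Finset.mem_univ (0 : Fin (n+2))), hv0, hadef]
    set D' : ℝ := ∑ p ∈ s, w p * x p ^ 2 with hD'def
    have hDsplit : (∑ p, (if p = 0 then -(β 0)^2 else w p) * x p^2)
        = -(β 0)^2 * x 0 ^ 2 + D' := by
      rw [← Finset.add_sum_erase _ _ (Finset.mem_univ (0 : Fin (n+2)))]
      simp only [if_pos rfl]
      congr 1
      exact Finset.sum_congr rfl fun p hp => by
        rw [if_neg (Finset.mem_erase.1 hp).1]
    rw [hS, hDsplit]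
    have hD'0 : 0 ≤ D' :=
      Finset.sum_nonneg fun p _ => mul_nonneg (hw p).le (sq_nonneg _)
    -- Cauchy-Schwarz : T^2 ≤ ρ * D'
    have hCS : T ^ 2 ≤ ρ * D' := by
      have h := Finset.sum_mul_sq_le_sq_mul_sq s
        (fun p => v p / Real.sqrt (w p)) (fun p => Real.sqrt (w p) * x p)
      have hfg : ∀ p ∈ s, (v p / Real.sqrt (w p)) * (Real.sqrt (w p) * x p)
          = v p * x p := by
        intro p _
        have hwne : Real.sqrt (w p) ≠ 0 := Real.sqrt_ne_zero'.mpr (hw p)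
        field_simp
      have hf2 : ∀ p ∈ s, (v p / Real.sqrt (w p)) ^ 2 = v p ^ 2 / w p := by
        intro p _
        rw [div_pow, Real.sq_sqrt (hw p).le]
      have hg2 : ∀ p ∈ s, (Real.sqrt (w p) * x p) ^ 2 = w p * x p ^ 2 := by
        intro p _
        rw [mul_pow, Real.sq_sqrt (hw p).le]
      rw [Finset.sum_congr rfl hfg, Finset.sum_congr rfl hf2,
        Finset.sum_congr rfl hg2] at h
      exact h
    -- final
    clear_value v w ρ k T a D'
    by_cases hx0 : x 0 = 0
    · obtain ⟨p, hp⟩ := Function.ne_iff.mp hx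
      have hp' : x p ≠ 0 := by simpa using hp
      have hps : p ∈ s := by
        refine Finset.mem_erase.2 ⟨?_, Finset.mem_univ _⟩
        intro h
        rw [h] at hp'
        exact hp' hx0
      have hxp2 : 0 < x p ^ 2 :=
        lt_of_le_of_ne (sq_nonneg _) (Ne.symm (pow_ne_zero 2 hp'))
      have hD'pos : 0 < D' := by
        refine lt_of_lt_of_le (mul_pos (hw p) hxp2) ?_
        rw [hD'def]
        exact Finset.single_le_sum
          (fun q _ => mul_nonneg (hw q).le (sq_nonneg _)) hps
      have e : -(β 0)^2 * x 0 ^ 2 = 0 := by rw [hx0]; ring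
      have e2 : 0 ≤ k * (a + T)^2 :=
        mul_nonneg (by linarith) (sq_nonneg _)
      linarith
    · have ha2 : 0 < a ^ 2 := by
        have h' : a ≠ 0 := by rw [hadef]; exact mul_ne_zero (hβ 0).ne' hx0
        exact lt_of_le_of_ne (sq_nonneg _) (Ne.symm (pow_ne_zero 2 h'))
      have hcore := core_ineq_aux k ρ D' a T hCS hρ0 hk1 hkρ hD'0 ha2
      have ha2' : a ^ 2 = β 0 ^ 2 * x 0 ^ 2 := by rw [hadef]; ring
      linarith
end
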